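/- arXiv:2003.02748 — 2 statements merged into one kernel-verified Lean document; each statement's English description precedes it below -/
import Mathlib

section
/- For every natural number n ≥ 152 and every j with 1 ≤ j ≤ ⌊(n-1)/2⌋, one has (n - j) · binom(n-1, ⌊(n-1)/2⌋) > 4 · (n - 2·j) · binom(n-1, j). -/
/-- Case A: when `d = n - 2j` is small (`d^2 < n + 2d`), a direct comparison works. -/
private lemma stmt5_caseA (n j : ℕ) (hn : 152 ≤ n) (hj2 : j ≤ (n - 1) / 2)
    (hA : (n - 2 * j) * (n - 2 * j) < n + 2 * (n - 2 * j)) :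
    4 * (n - 2 * j) * Nat.choose (n - 1) j < (n - j) * Nat.choose (n - 1) ((n - 1) / 2) := by
  have hd7 : 7 * (n - 2 * j) < n := by
    by_contra h
    push_neg at h
    nlinarith
  have hstrict : 4 * (n - 2 * j) < n - j := by omega
  have hpos : 0 < Nat.choose (n - 1) ((n - 1) / 2) := Nat.choose_pos (by omega)
  calc 4 * (n - 2 * j) * Nat.choose (n - 1) j
      ≤ 4 * (n - 2 * j) * Nat.choose (n - 1) ((n - 1) / 2) :=
        Nat.mul_le_mul le_rfl (Nat.choose_le_middle j (n - 1))
    _ < (n - j) * Nat.choose (n - 1) ((n - 1) / 2) :=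
        mul_lt_mul_of_pos_right hstrict hpos

private lemma stmt5_aux (n : ℕ) (hn : 152 ≤ n) :
    ∀ k j, 1 ≤ j → j ≤ (n - 1) / 2 → (n - 1) / 2 - j ≤ k →
      4 * (n - 2 * j) * Nat.choose (n - 1) j < (n - j) * Nat.choose (n - 1) ((n - 1) / 2) := by
  intro k
  induction k with
  | zero =>
      intro j hj1 hj2 hk
      apply stmt5_caseA n j hn hj2
      have hd : n - 2 * j ≤ 2 := by omega
      nlinarith
  | succ k ih =>
      intro j hj1 hj2 hk
      by_cases hA : (n - 2 * j) * (n - 2 * j) < n + 2 * (n - 2 * j)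
      · exact stmt5_caseA n j hn hj2 hA
      · push_neg at hA
        -- here d = n - 2j satisfies d^2 ≥ n + 2d, in particular d ≥ 3, so j + 1 ≤ (n-1)/2
        have hd3 : 3 ≤ n - 2 * j := by
          by_contra h
          push_neg at h
          nlinarith
        have hjm : j + 1 ≤ (n - 1) / 2 := by omega
        have ihj := ih (j + 1) (by omega) hjm (by omega)
        -- step relation for binomial coefficients
        have hstep : Nat.choose (n - 1) (j + 1) * (j + 1) = Nat.choose (n - 1) j * (n - 1 - j) :=
          Nat.choose_succ_right_eq (n - 1) j
        -- key algebraic inequality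
        have key2 : (n - 2 * j) * (j + 1) ≤ (n - 2 * (j + 1)) * (n - j) := by
          zify [show 2 * j ≤ n by omega, show 2 * (j + 1) ≤ n by omega, show j ≤ n by omega]
          zify [show 2 * j ≤ n by omega] at hA
          nlinarith
        set C1 := Nat.choose (n - 1) (j + 1) with hC1
        set Cj := Nat.choose (n - 1) j with hCj
        set Cm := Nat.choose (n - 1) ((n - 1) / 2) with hCm
        have hBpos : 0 < (n - j) * (n - 1 - j) := Nat.mul_pos (by omega) (by omega)
        have c0 : (4 * (n - 2 * j) * (j + 1) * C1) * (n - (j + 1))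
            < ((n - j) * (n - 1 - j) * Cm) * (n - (j + 1)) := by
          calc (4 * (n - 2 * j) * (j + 1) * C1) * (n - (j + 1))
              = ((4 * ((n - 2 * j) * (j + 1))) * (n - (j + 1))) * C1 := by ring
            _ ≤ ((4 * ((n - 2 * (j + 1)) * (n - j))) * (n - (j + 1))) * C1 :=
                Nat.mul_le_mul (Nat.mul_le_mul (Nat.mul_le_mul le_rfl key2) le_rfl) le_rfl
            _ = ((n - j) * (n - 1 - j)) * (4 * (n - 2 * (j + 1)) * C1) := by
                have hb : n - (j + 1) = n - 1 - j := by omega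
                rw [hb]; ring
            _ < ((n - j) * (n - 1 - j)) * ((n - (j + 1)) * Cm) :=
                mul_lt_mul_of_pos_left ihj hBpos
            _ = ((n - j) * (n - 1 - j) * Cm) * (n - (j + 1)) := by ring
        have c1 : 4 * (n - 2 * j) * (j + 1) * C1 < (n - j) * (n - 1 - j) * Cm :=
          lt_of_mul_lt_mul_right c0 (Nat.zero_le _)
        have hrw : (j + 1) * C1 = (n - 1 - j) * Cj := by
          rw [mul_comm, hstep, mul_comm]
        have c2 : (4 * (n - 2 * j) * Cj) * (n - 1 - j) < ((n - j) * Cm) * (n - 1 - j) := by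
          calc (4 * (n - 2 * j) * Cj) * (n - 1 - j)
              = 4 * (n - 2 * j) * ((n - 1 - j) * Cj) := by ring
            _ = 4 * (n - 2 * j) * ((j + 1) * C1) := by rw [hrw]
            _ = 4 * (n - 2 * j) * (j + 1) * C1 := by ring
            _ < (n - j) * (n - 1 - j) * Cm := c1
            _ = ((n - j) * Cm) * (n - 1 - j) := by ring
        exact lt_of_mul_lt_mul_right c2 (Nat.zero_le _)

theorem stmt5 (n j : ℕ) (hn : 152 ≤ n) (hj1 : 1 ≤ j) (hj2 : j ≤ (n - 1) / 2) :
    4 * (n - 2 * j) * Nat.choose (n - 1) j < (n - j) * Nat.choose (n - 1) ((n - 1) / 2) := by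
  exact stmt5_aux n hn ((n - 1) / 2 - j) j hj1 hj2 le_rfl
end

section
/- Let p = 3 and n ≥ 13, and let μ be a 3-restricted 3-strict partition of n with largest part μ_1 ≤ 4 and μ ≠ β_n. Then μ_1 = 4 and (μ_2, μ_3, ..., μ_h) = β_{n-4}, i.e. μ = (4, 3^{d}, e) where n - 4 = 3d + e with 0 < e < 3, or μ = (4, 3^{d-1}, 2, 1) when 3 ∣ n - 4. -/
/-- The list of parts of the partition `β_m` for `p = 3`: `(3^d, e)` if `m = 3d + e` with
`0 < e < 3`, and `(3^{d-1}, 2, 1)` if `3 ∣ m`. -/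
def betaList3 (m : ℕ) : List ℕ :=
  if m % 3 > 0 then List.replicate (m / 3) 3 ++ [m % 3]
  else List.replicate (m / 3 - 1) 3 ++ [2, 1]

lemma beta_add_three (m : ℕ) (hm : 1 ≤ m) : betaList3 (m + 3) = 3 :: betaList3 m := by
  unfold betaList3
  have h1 : (m + 3) % 3 = m % 3 := Nat.add_mod_right m 3
  have h2 : (m + 3) / 3 = m / 3 + 1 := Nat.add_div_right m (by norm_num)
  rw [h1, h2]
  by_cases h : m % 3 > 0
  · simp [h, List.replicate_succ]
  · have hm3 : 1 ≤ m / 3 := by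
      have := Nat.div_add_mod m 3
      omega
    simp only [h, if_false]
    have : m / 3 + 1 - 1 = (m / 3 - 1) + 1 := by omega
    rw [this, List.replicate_succ]
    simp

lemma lemL : ∀ (l : List ℕ), l ≠ [] →
    (∀ x ∈ l, 0 < x) →
    (∀ i, i + 1 < l.length → l.getD (i + 1) 0 ≤ l.getD i 0) →
    (∀ i < l.length,
      1 - (if 3 ∣ l.getD i 0 then 1 else 0) ≤ l.getD i 0 - l.getD (i + 1) 0 ∧
      l.getD i 0 - l.getD (i + 1) 0 ≤ 3 - (if 3 ∣ l.getD i 0 then 1 else 0)) →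
    l.getD 0 0 ≤ 3 →
    l = betaList3 l.sum := by
  intro l
  induction l with
  | nil => simp
  | cons a rest ih =>
    intro _ hpos hdec hRP hhead
    have ha : 0 < a := hpos a (by simp)
    have ha3 : a ≤ 3 := by simpa using hhead
    have hR0 := hRP 0 (by simp)
    simp only [List.getD_cons_zero, List.getD_cons_succ] at hR0
    -- facts about rest for recursion
    have hdec' : ∀ i, i + 1 < rest.length → rest.getD (i + 1) 0 ≤ rest.getD i 0 := by
      intro i h
      have := hdec (i + 1) (by simpa using Nat.succ_lt_succ h)
      simpa using this
    have hRP' : ∀ i < rest.length,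
        1 - (if 3 ∣ rest.getD i 0 then 1 else 0) ≤ rest.getD i 0 - rest.getD (i + 1) 0 ∧
        rest.getD i 0 - rest.getD (i + 1) 0 ≤ 3 - (if 3 ∣ rest.getD i 0 then 1 else 0) := by
      intro i h
      have := hRP (i + 1) (by simpa using Nat.succ_lt_succ h)
      simpa using this
    have hpos' : ∀ x ∈ rest, 0 < x := fun x hx => hpos x (by simp [hx])
    interval_cases a
    · -- a = 1
      have h31 : ¬ (3 ∣ 1) := by norm_num
      simp [h31] at hR0
      match rest, hR0 with
      | [], _ =>
        simp [betaList3]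
      | b :: rest2, hR0 =>
        exfalso
        have hb : 0 < b := hpos b (by simp)
        simp at hR0
        omega
    · -- a = 2
      have h32 : ¬ (3 ∣ 2) := by norm_num
      simp [h32] at hR0
      match rest, hR0, hRP', hpos' with
      | [], _, _, _ => simp [betaList3]
      | b :: rest2, hR0, hRP', hpos' =>
        have hb : 0 < b := hpos' b (by simp)
        have hb1 : b = 1 := by simp at hR0; omega
        subst hb1
        have hR1 := hRP' 0 (by simp)
        have h31 : ¬ (3 ∣ 1) := by norm_num
        simp [h31] at hR1
        match rest2, hR1 with
        | [], _ =>
          have : (2 : ℕ) + (1 + 0) = 3 := by norm_num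
          simp [betaList3]
        | c :: rest3, hR1 =>
          exfalso
          have hc : 0 < c := hpos' c (by simp)
          simp at hR1
          omega
    · -- a = 3
      have h33 : (3 : ℕ) ∣ 3 := dvd_refl 3
      simp [h33] at hR0
      match rest, hR0, hdec', hRP', hpos' with
      | [], hR0, _, _, _ => exfalso; simp at hR0
      | b :: rest2, hR0, hdec', hRP', hpos' =>
        have hb : 0 < b := hpos' b (by simp)
        have hb3 : b ≤ 3 := by
          have := hdec 0 (by simp)
          simpa using this
        have hrec := ih (by simp) hpos' hdec' hRP' (by simpa using hb3)
        have hsum1 : (1 : ℕ) ≤ (b :: rest2).sum := by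
          simp
          omega
        have : (3 :: b :: rest2).sum = (b :: rest2).sum + 3 := by simp; ring
        rw [this, beta_add_three _ hsum1, ← hrec]

theorem stmt12 (n : ℕ) (hn : 13 ≤ n) (l : List ℕ) (hne : l ≠ [])
    (hpos : ∀ x ∈ l, 0 < x)
    (hdec : ∀ i, i + 1 < l.length → l.getD (i + 1) 0 ≤ l.getD i 0)
    (hRP : ∀ i < l.length,
      1 - (if 3 ∣ l.getD i 0 then 1 else 0) ≤ l.getD i 0 - l.getD (i + 1) 0 ∧
      l.getD i 0 - l.getD (i + 1) 0 ≤ 3 - (if 3 ∣ l.getD i 0 then 1 else 0))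
    (hsum : l.sum = n)
    (hhead : l.getD 0 0 ≤ 4)
    (hnb : l ≠ betaList3 n) :
    l = 4 :: betaList3 (n - 4) := by
  match l, hne with
  | a :: rest, _ =>
  have ha : 0 < a := hpos a (by simp)
  have ha4 : a ≤ 4 := by simpa using hhead
  have hdec' : ∀ i, i + 1 < rest.length → rest.getD (i + 1) 0 ≤ rest.getD i 0 := by
    intro i h
    have := hdec (i + 1) (by simpa using Nat.succ_lt_succ h)
    simpa using this
  have hRP' : ∀ i < rest.length,
      1 - (if 3 ∣ rest.getD i 0 then 1 else 0) ≤ rest.getD i 0 - rest.getD (i + 1) 0 ∧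
      rest.getD i 0 - rest.getD (i + 1) 0 ≤ 3 - (if 3 ∣ rest.getD i 0 then 1 else 0) := by
    intro i h
    have := hRP (i + 1) (by simpa using Nat.succ_lt_succ h)
    simpa using this
  have hpos' : ∀ x ∈ rest, 0 < x := fun x hx => hpos x (by simp [hx])
  by_cases hle : a ≤ 3
  · exfalso
    apply hnb
    rw [← hsum]
    exact lemL _ (by simp) hpos hdec hRP (by simpa using hle)
  · have ha4' : a = 4 := by omega
    subst ha4'
    have hR0 := hRP 0 (by simp)
    have h34 : ¬ (3 ∣ 4) := by norm_num
    simp only [List.getD_cons_zero, List.getD_cons_succ, h34, if_false] at hR0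
    match rest, hR0, hdec', hRP', hpos' with
    | [], hR0, _, _, _ => exfalso; simp at hR0
    | b :: rest2, hR0, hdec', hRP', hpos' =>
      have hb : 0 < b := hpos' b (by simp)
      have hb3 : b ≤ 3 := by simp at hR0; omega
      have hrec := lemL _ (by simp) hpos' hdec' hRP' (by simpa using hb3)
      have hs : (b :: rest2).sum = n - 4 := by
        simp at hsum ⊢
        omega
      rw [hs] at hrec
      rw [hrec]
end
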